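/- Let σ:X→X be a homeomorphism of a compact metric space. For ε,δ>0 let P_{ε,δ} be the set of x∈X for which there exists N such that for all n>N there is an integer k with n(1+ε)<k<n(1+2ε) and dist(x, σ^k x)<δ. Then for every σ-invariant Borel probability measure μ, μ(P_{ε,δ})=1. -/

import Mathlib

open MeasureTheory Set Function Filter

section Aux

variable {X : Type*} [MetricSpace X] [CompactSpace X]
    [MeasurableSpace X] [BorelSpace X]

/-- The set of points of `B` that do not return to `B` within the first `g` steps. -/
private def Dset (σ : X ≃ₜ X) (B : Set X) (g : ℕ) : Set X :=
  B ∩ ⋂ j ∈ Set.Icc 1 g, (⇑σ)^[j] ⁻¹' Bᶜ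

private lemma mem_Dset {σ : X ≃ₜ X} {B : Set X} {g : ℕ} {x : X} :
    x ∈ Dset σ B g ↔ x ∈ B ∧ ∀ j, 1 ≤ j → j ≤ g → (⇑σ)^[j] x ∉ B := by
  simp [Dset, Set.mem_iInter, Set.mem_Icc, and_imp]

private lemma Dset_measurable (σ : X ≃ₜ X) {B : Set X} (hB : MeasurableSet B) (g : ℕ) :
    MeasurableSet (Dset σ B g) :=
  hB.inter (MeasurableSet.biInter (Set.to_countable _)
    (fun j _ => (σ.continuous.measurable.iterate j) hB.compl))

private lemma iter_symm_cancel (σ : X ≃ₜ X) {a b : ℕ} (hab : a ≤ b) (y : X) :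
    (⇑σ)^[a] ((⇑σ.symm)^[b] y) = (⇑σ.symm)^[b - a] y := by
  have h1 : ∀ z, (⇑σ)^[a] ((⇑σ.symm)^[a] z) = z :=
    fun z => Function.LeftInverse.iterate σ.apply_symm_apply a z
  have h2 : (⇑σ.symm)^[b] y = (⇑σ.symm)^[a] ((⇑σ.symm)^[b - a] y) := by
    rw [← Function.iterate_add_apply]
    congr 1
    omega
  rw [h2, h1]

/-- Kac-type inequality: the total measure of the "no return within `g` steps" sets
is at most `1`. -/
private lemma kac (σ : X ≃ₜ X) (μ : Measure X) [IsProbabilityMeasure μ]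
    (hinv : MeasurePreserving (⇑σ) μ μ) {B : Set X} (hB : MeasurableSet B) :
    ∑' g : ℕ, μ (Dset σ B g) ≤ 1 := by
  have hinv' : MeasurePreserving (⇑σ.symm) μ μ := by
    have h := MeasurePreserving.symm σ.toMeasurableEquiv
      (by rwa [Homeomorph.toMeasurableEquiv_coe])
    rwa [Homeomorph.toMeasurableEquiv_symm_coe] at h
  set F : ℕ → Set X := fun g => (⇑σ.symm)^[g] ⁻¹' (Dset σ B g) with hF
  have hFmeas : ∀ g, MeasurableSet (F g) :=
    fun g => (σ.symm.continuous.measurable.iterate g) (Dset_measurable σ hB g)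
  have hFe : ∀ g, μ (F g) = μ (Dset σ B g) :=
    fun g => (hinv'.iterate g).measure_preimage (Dset_measurable σ hB g).nullMeasurableSet
  have hdisj : Pairwise (Disjoint on F) := by
    have key : ∀ g g' : ℕ, g < g' → Disjoint (F g) (F g') := by
      intro g g' hlt
      rw [Set.disjoint_left]
      intro y hy hy'
      rw [hF, Set.mem_preimage, mem_Dset] at hy hy'
      have h1 : (⇑σ.symm)^[g] y ∈ B := hy.1
      have h2 : (⇑σ)^[g' - g] ((⇑σ.symm)^[g'] y) ∉ B :=
        hy'.2 (g' - g) (by omega) (by omega)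
      rw [iter_symm_cancel σ (by omega)] at h2
      have : g' - (g' - g) = g := by omega
      rw [this] at h2
      exact h2 h1
    intro g g' hne
    rcases hne.lt_or_gt with h | h
    · exact key g g' h
    · exact (key g' g h).symm
  calc ∑' g : ℕ, μ (Dset σ B g) = ∑' g : ℕ, μ (F g) := by simp [hFe]
    _ = μ (⋃ g, F g) := (measure_iUnion hdisj hFmeas).symm
    _ ≤ μ Set.univ := measure_mono (Set.subset_univ _)
    _ = 1 := measure_univ

/-- Almost every point of `B` returns to `B` at infinitely many times. -/
private lemma ae_inf_returns (σ : X ≃ₜ X) (μ : Measure X) [IsProbabilityMeasure μ]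
    (hinv : MeasurePreserving (⇑σ) μ μ) {B : Set X} (hB : MeasurableSet B) :
    ∀ᵐ x ∂μ, x ∈ B → ∀ M : ℕ, ∃ k, M < k ∧ (⇑σ)^[k] x ∈ B := by
  classical
  set Dinf : Set X := B ∩ ⋂ j ∈ Set.Ici 1, (⇑σ)^[j] ⁻¹' Bᶜ with hDinf
  have hDinfmem : ∀ x : X, x ∈ Dinf ↔ x ∈ B ∧ ∀ j, 1 ≤ j → (⇑σ)^[j] x ∉ B := by
    intro x; simp [hDinf, Set.mem_iInter]
  have hDinfmeas : MeasurableSet Dinf :=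
    hB.inter (MeasurableSet.biInter (Set.to_countable _)
      (fun j _ => (σ.continuous.measurable.iterate j) hB.compl))
  have hDinf0 : μ Dinf = 0 := by
    by_contra h
    have hsub : ∀ g : ℕ, μ Dinf ≤ μ (Dset σ B g) := by
      intro g
      refine measure_mono (fun x hx => ?_)
      rw [hDinfmem] at hx
      exact mem_Dset.2 ⟨hx.1, fun j h1 _ => hx.2 j h1⟩
    have htop : (⊤ : ENNReal) ≤ 1 := by
      calc (⊤ : ENNReal) = ∑' _ : ℕ, μ Dinf := (ENNReal.tsum_const_eq_top_of_ne_zero h).symm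
        _ ≤ ∑' g : ℕ, μ (Dset σ B g) := ENNReal.tsum_le_tsum hsub
        _ ≤ 1 := kac σ μ hinv hB
    simp at htop
  have hNR : μ (⋃ m : ℕ, (⇑σ)^[m] ⁻¹' Dinf) = 0 := by
    refine measure_iUnion_null (fun m => ?_)
    rw [(hinv.iterate m).measure_preimage hDinfmeas.nullMeasurableSet]
    exact hDinf0
  filter_upwards [measure_eq_zero_iff_ae_notMem.mp hNR] with x hx hxB M
  by_contra hcon
  push_neg at hcon
  set P : ℕ → Prop := fun m => (⇑σ)^[m] x ∈ B with hP
  set m := Nat.findGreatest P M with hm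
  have hPm : P m := Nat.findGreatest_spec (Nat.zero_le M) (by simpa [hP] using hxB)
  have hmem : (⇑σ)^[m] x ∈ Dinf := by
    rw [hDinfmem]
    refine ⟨hPm, fun j hj1 hmemB => ?_⟩
    rw [← Function.iterate_add_apply] at hmemB
    rcases le_or_gt (j + m) M with hle | hgt
    · exact Nat.findGreatest_is_greatest (P := P) (by omega) hle hmemB
    · exact hcon (j + m) hgt hmemB
  exact hx (Set.mem_iUnion.2 ⟨m, hmem⟩)

/-- Deterministic lemma: a point with infinitely many returns and eventually small
return gaps has returns in every window `(n(1+ε), n(1+2ε))` for large `n`. -/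
private lemma det_lemma {ε : ℝ} (hε : 0 < ε) {K : ℕ} (hK : 2 * (1 + ε) / ε ≤ (K : ℝ))
    {B : Set X} {σ : X ≃ₜ X} {x : X}
    (hret : ∀ M : ℕ, ∃ k, M < k ∧ (⇑σ)^[k] x ∈ B)
    (M₀ : ℕ)
    (hgap : ∀ m, M₀ ≤ m → (⇑σ)^[m] x ∈ B →
      ∃ k, m < k ∧ k ≤ m + m / K ∧ (⇑σ)^[k] x ∈ B) :
    ∃ N : ℕ, ∀ n : ℕ, n > N →
      ∃ k : ℕ, (n : ℝ) * (1 + ε) < k ∧ (k : ℝ) < (n : ℝ) * (1 + 2 * ε) ∧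
        (⇑σ)^[k] x ∈ B := by
  classical
  obtain ⟨m₁, hm₁M, hm₁B⟩ := hret M₀
  refine ⟨m₁, fun n hn => ?_⟩
  have hn1 : (1 : ℝ) ≤ (n : ℝ) := by
    have : 1 ≤ n := by omega
    exact_mod_cast this
  have hne : (0 : ℝ) ≤ (n : ℝ) * (1 + ε) := by positivity
  set b : ℕ := ⌊(n : ℝ) * (1 + ε)⌋₊ with hb
  have hm₁b : m₁ ≤ b := by
    apply Nat.le_floor
    have h1 : (m₁ : ℝ) ≤ (n : ℝ) := by exact_mod_cast Nat.le_of_lt hn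
    nlinarith
  set P : ℕ → Prop := fun m => (⇑σ)^[m] x ∈ B with hPdef
  set m := Nat.findGreatest P b with hm
  have hPm : P m := Nat.findGreatest_spec hm₁b hm₁B
  have hm₁m : m₁ ≤ m := Nat.le_findGreatest hm₁b hm₁B
  have hM₀m : M₀ ≤ m := by omega
  obtain ⟨k, hk1, hk2, hk3⟩ := hgap m hM₀m hPm
  refine ⟨k, ?_, ?_, hk3⟩
  · -- lower bound
    by_contra hcon
    push_neg at hcon
    have hkb : k ≤ b := Nat.le_floor hcon
    exact Nat.findGreatest_is_greatest hk1 hkb hk3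
  · -- upper bound
    have hKpos : (0 : ℝ) < (K : ℝ) := by
      have : (0 : ℝ) < 2 * (1 + ε) / ε := by positivity
      linarith
    have hmle : (m : ℝ) ≤ (n : ℝ) * (1 + ε) := by
      calc (m : ℝ) ≤ (b : ℝ) := by exact_mod_cast Nat.findGreatest_le b
        _ ≤ (n : ℝ) * (1 + ε) := Nat.floor_le hne
    have hdiv : ((m / K : ℕ) : ℝ) ≤ (m : ℝ) / (K : ℝ) := Nat.cast_div_le
    have hdiv2 : (m : ℝ) / (K : ℝ) ≤ ((n : ℝ) * (1 + ε)) / (2 * (1 + ε) / ε) := by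
      apply div_le_div₀ hne hmle (by positivity) hK
    have heq : ((n : ℝ) * (1 + ε)) / (2 * (1 + ε) / ε) = (n : ℝ) * ε / 2 := by
      field_simp
    have hkle : (k : ℝ) ≤ (m : ℝ) + ((m / K : ℕ) : ℝ) := by exact_mod_cast hk2
    have : (k : ℝ) ≤ (n : ℝ) * (1 + ε) + (n : ℝ) * ε / 2 := by
      rw [heq] at hdiv2
      linarith
    nlinarith

end Aux

/-- For a homeomorphism `σ` of a compact metric space and any invariant Borel
probability measure `μ`, the set `P_{ε,δ}` of points returning `δ`-close to themselves
at some time `k` with `n(1+ε) < k < n(1+2ε)` for all large `n` has full measure. -/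
theorem almost_every_point_returns {X : Type*} [MetricSpace X] [CompactSpace X]
    [MeasurableSpace X] [BorelSpace X]
    (σ : X ≃ₜ X) (μ : Measure X) [IsProbabilityMeasure μ]
    (hinv : MeasurePreserving (⇑σ) μ μ)
    (ε δ : ℝ) (hε : 0 < ε) (hδ : 0 < δ) :
    μ {x : X | ∃ N : ℕ, ∀ n : ℕ, n > N →
        ∃ k : ℕ, (n : ℝ) * (1 + ε) < k ∧ (k : ℝ) < (n : ℝ) * (1 + 2 * ε) ∧
          dist x ((⇑σ)^[k] x) < δ} = 1 := by
  classical
  set Pset : Set X := {x : X | ∃ N : ℕ, ∀ n : ℕ, n > N →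
      ∃ k : ℕ, (n : ℝ) * (1 + ε) < k ∧ (k : ℝ) < (n : ℝ) * (1 + 2 * ε) ∧
        dist x ((⇑σ)^[k] x) < δ} with hPset
  -- per-ball a.e. statement
  have ball_ae : ∀ B : Set X, MeasurableSet B → (∀ a ∈ B, ∀ b ∈ B, dist a b < δ) →
      ∀ᵐ x ∂μ, x ∈ B → x ∈ Pset := by
    intro B hB hdiam
    set K : ℕ := ⌈2 * (1 + ε) / ε⌉₊ with hKdef
    have hK : 2 * (1 + ε) / ε ≤ (K : ℝ) := Nat.le_ceil _
    set Bad : ℕ → Set X := fun m => (⇑σ)^[m] ⁻¹' (Dset σ B (m / K)) with hBad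
    have hKne : K ≠ 0 := by
      have : (0:ℝ) < 2 * (1 + ε) / ε := by positivity
      simpa [hKdef, Nat.ceil_eq_zero, not_le] using Nat.ceil_pos.mpr this |>.ne'
    haveI : NeZero K := ⟨hKne⟩
    have hBadsum : ∑' m : ℕ, μ (Bad m) ≠ ⊤ := by
      have h1 : ∀ m : ℕ, μ (Bad m) = μ (Dset σ B (m / K)) := fun m =>
        (hinv.iterate m).measure_preimage (Dset_measurable σ hB (m / K)).nullMeasurableSet
      have h2 : ∑' m : ℕ, μ (Dset σ B (m / K)) = (K : ENNReal) * ∑' g : ℕ, μ (Dset σ B g) := by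
        have e := Nat.divModEquiv K
        have h3 : ∑' m : ℕ, μ (Dset σ B (m / K))
            = ∑' p : ℕ × Fin K, μ (Dset σ B p.1) := by
          rw [← Equiv.tsum_eq (Nat.divModEquiv K) (fun p : ℕ × Fin K => μ (Dset σ B p.1))]
          simp [Nat.divModEquiv]
        have hinner : ∀ n : ℕ, ∑' _ : Fin K, μ (Dset σ B n)
            = (K : ENNReal) * μ (Dset σ B n) := by
          intro n
          rw [tsum_fintype]
          simp [Finset.sum_const, mul_comm]
        rw [h3, ENNReal.tsum_prod']
        simp only [hinner]
        exact ENNReal.tsum_mul_left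
      have h4 : ∑' m : ℕ, μ (Bad m) ≤ (K : ENNReal) := by
        calc ∑' m : ℕ, μ (Bad m) = ∑' m : ℕ, μ (Dset σ B (m / K)) := by simp [h1]
          _ = (K : ENNReal) * ∑' g : ℕ, μ (Dset σ B g) := h2
          _ ≤ (K : ENNReal) * 1 := by
              exact mul_le_mul_right (kac σ μ hinv hB) _
          _ = (K : ENNReal) := mul_one _
      exact ne_top_of_le_ne_top (by simp) h4
    have hBC : ∀ᵐ x ∂μ, ∀ᶠ m in atTop, x ∉ Bad m := by
      have h0 := measure_limsup_atTop_eq_zero hBadsum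
      filter_upwards [measure_eq_zero_iff_ae_notMem.mp h0] with x hx
      rw [mem_limsup_iff_frequently_mem, Filter.not_frequently] at hx
      exact hx
    filter_upwards [ae_inf_returns σ μ hinv hB, hBC] with x hret hgap hxB
    obtain ⟨M₀, hM₀⟩ := Filter.eventually_atTop.mp hgap
    have hgap' : ∀ m, M₀ ≤ m → (⇑σ)^[m] x ∈ B →
        ∃ k, m < k ∧ k ≤ m + m / K ∧ (⇑σ)^[k] x ∈ B := by
      intro m hm hmB
      have := hM₀ m hm
      rw [hBad, Set.mem_preimage, mem_Dset] at this
      push_neg at this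
      obtain ⟨j, hj1, hj2, hj3⟩ := this hmB
      rw [← Function.iterate_add_apply] at hj3
      exact ⟨j + m, by omega, by omega, hj3⟩
    obtain ⟨N, hN⟩ := det_lemma hε hK (hret hxB) M₀ hgap'
    refine ⟨N, fun n hn => ?_⟩
    obtain ⟨k, h1, h2, h3⟩ := hN n hn
    exact ⟨k, h1, h2, hdiam x hxB _ h3⟩
  -- finite cover by small balls
  obtain ⟨t, ht⟩ : ∃ t : Finset X, Set.univ ⊆ ⋃ c ∈ t, Metric.ball c (δ / 3) := by
    apply isCompact_univ.elim_finite_subcover (fun c : X => Metric.ball c (δ / 3))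
      (fun c => Metric.isOpen_ball)
    intro x _
    exact Set.mem_iUnion.2 ⟨x, Metric.mem_ball_self (by positivity)⟩
  have hcompl : μ Psetᶜ = 0 := by
    have hsub : Psetᶜ ⊆ ⋃ c ∈ t, (Metric.closedBall c (δ / 3) ∩ Psetᶜ) := by
      intro x hx
      obtain ⟨c, hct, hxc⟩ := Set.mem_iUnion₂.mp (ht (Set.mem_univ x))
      exact Set.mem_iUnion₂.2 ⟨c, hct, Metric.ball_subset_closedBall hxc, hx⟩
    refine measure_mono_null hsub ((measure_biUnion_null_iff t.countable_toSet).mpr ?_)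
    intro c _
    have hdiam : ∀ a ∈ Metric.closedBall c (δ / 3), ∀ b ∈ Metric.closedBall c (δ / 3),
        dist a b < δ := by
      intro a ha b hb
      rw [Metric.mem_closedBall] at ha hb
      calc dist a b ≤ dist a c + dist c b := dist_triangle a c b
        _ ≤ δ / 3 + δ / 3 := by rw [dist_comm c b]; exact add_le_add ha hb
        _ < δ := by linarith
    have hae := ball_ae (Metric.closedBall c (δ / 3)) measurableSet_closedBall hdiam
    rw [ae_iff] at hae
    refine measure_mono_null (fun x hx => ?_) hae
    simp only [Set.mem_setOf_eq]
    push_neg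
    exact ⟨hx.1, hx.2⟩
  have h1 : (1 : ENNReal) ≤ μ Pset := by
    calc (1 : ENNReal) = μ Set.univ := measure_univ.symm
      _ = μ (Pset ∪ Psetᶜ) := by rw [Set.union_compl_self]
      _ ≤ μ Pset + μ Psetᶜ := measure_union_le _ _
      _ = μ Pset := by rw [hcompl, add_zero]
  exact le_antisymm prob_le_one h1
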